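/- Let f, g : [-1,1] → ℝ be such that f is of r-H_f-Hölder type on [−1,1], i.e. |f(x) − f(y)| ≤ H_f·|x − y|^r for all x, y ∈ [−1,1], where r > 0 and H_f > 0 are given, and g is of bounded variation on [−1,1] with g(−1) < g(1). Define A = (√3/2)·[∫_{-1}^{1} g(t) dt − ((3−√3)/3)·g(1) − ((3+√3)/3)·g(−1)] and B = (√3/2)·[((3+√3)/3)·g(1) + ((3−√3)/3)·g(−1) − ∫_{-1}^{1} g(t) dt], and assume A ≥ 0 and B ≥ 0. Then |∫_{-1}^{1} f(t) dg(t) − A·f(−√3/3) − B·f(√3/3)| ≤ H_f·((3+√3)/3)^r · V_{-1}^{1}(g), where V_{-1}^{1}(g) denotes the total variation of g on [−1,1]. -/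

import Mathlib

open MeasureTheory intervalIntegral

/-- `IsRSIntegral f g a b I` means that the Riemann–Stieltjes integral
`∫_a^b f dg` exists and equals `I`: for every `ε > 0` there is `δ > 0` such that
every tagged partition `a = t 0 ≤ t 1 ≤ ⋯ ≤ t n = b` of mesh `< δ`, with tags
`ξ i ∈ [t i, t (i+1)]`, has Riemann–Stieltjes sum within `ε` of `I`. -/
def IsRSIntegral (f g : ℝ → ℝ) (a b I : ℝ) : Prop :=
  ∀ ε > (0 : ℝ), ∃ δ > (0 : ℝ), ∀ (n : ℕ) (t : Fin (n + 1) → ℝ) (ξ : Fin n → ℝ),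
    Monotone t → t 0 = a → t (Fin.last n) = b →
    (∀ i : Fin n, ξ i ∈ Set.Icc (t i.castSucc) (t i.succ)) →
    (∀ i : Fin n, t i.succ - t i.castSucc < δ) →
    |(∑ i : Fin n, f (ξ i) * (g (t i.succ) - g (t i.castSucc))) - I| < ε


private lemma discrete_ivt (A : ℝ) : ∀ (n : ℕ) (P : ℕ → ℝ), 0 < n → P 0 ≤ A → A ≤ P n →
    ∃ k, k < n ∧ P k ≤ A ∧ A ≤ P (k+1) := by
  intro n
  induction n with
  | zero => intro P h; omega
  | succ m ih =>
    intro P _ h0 hn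
    by_cases hm : A ≤ P m
    · rcases Nat.eq_zero_or_pos m with h | h
      · subst h; exact ⟨0, by omega, h0, hn⟩
      · obtain ⟨k, hk, h1, h2⟩ := ih P h h0 hm
        exact ⟨k, by omega, h1, h2⟩
    · exact ⟨m, by omega, le_of_not_ge hm, hn⟩

private lemma sum_est (fx1 fx2 M A B : ℝ)
    (n : ℕ) (hn : 0 < n) (φ Y : ℕ → ℝ)
    (hY : ∀ i < n, |Y i - fx1| ≤ M ∧ |Y i - fx2| ≤ M)
    (hM : 0 ≤ M)
    (hA0 : 0 ≤ A) (hB0 : 0 ≤ B) (hAB : A + B = φ n - φ 0) :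
    |(∑ i ∈ Finset.range n, Y i * (φ (i+1) - φ i)) - (A * fx1 + B * fx2)|
      ≤ M * ∑ i ∈ Finset.range n, |φ (i+1) - φ i| := by
  set P : ℕ → ℝ := fun j => φ j - φ 0 with hP
  obtain ⟨k, hk, hPk, hPk1⟩ := discrete_ivt A n P hn (by simp [hP, hA0]) (by simp [hP, ← hAB]; linarith)
  classical
  set a : ℕ → ℝ := fun i => if i < k then φ (i+1) - φ i else if i = k then A - P k else 0 with ha
  set b : ℕ → ℝ := fun i => (φ (i+1) - φ i) - a i with hb
  have hsa : ∑ i ∈ Finset.range n, a i = A := by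
    have h1 : ∑ i ∈ Finset.range n, a i = ∑ i ∈ Finset.range (k+1), a i := by
      refine (Finset.sum_subset (by simp; omega) ?_).symm
      intro i hi hni
      simp only [Finset.mem_range] at hi hni
      simp only [ha, if_neg (by omega : ¬ i < k), if_neg (by omega : ¬ i = k)]
    rw [h1, Finset.sum_range_succ]
    have h2 : ∑ i ∈ Finset.range k, a i = ∑ i ∈ Finset.range k, (φ (i+1) - φ i) := by
      refine Finset.sum_congr rfl fun i hi => ?_
      simp only [Finset.mem_range] at hi
      simp [ha, hi]
    rw [h2, Finset.sum_range_sub (fun j => φ j) k]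
    simp [ha, hP]
  have hsb : ∑ i ∈ Finset.range n, b i = B := by
    have : ∀ i, b i = (φ (i+1) - φ i) - a i := fun i => rfl
    simp only [this, Finset.sum_sub_distrib, hsa, Finset.sum_range_sub (fun j => φ j) n]
    linarith
  have habs : ∀ i < n, |a i| + |b i| ≤ |φ (i+1) - φ i| := by
    intro i hi
    rcases lt_trichotomy i k with h | h | h
    · simp [ha, hb, h, abs_nonneg]
    · subst h
      have ha' : a i = A - P i := by simp [ha]
      have hΔ : φ (i+1) - φ i = P (i+1) - P i := by simp [hP]
      have h1 : 0 ≤ a i := by rw [ha']; linarith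
      have h2 : 0 ≤ b i := by
        have hbi : b i = (φ (i+1) - φ i) - a i := rfl
        rw [hbi, ha', hΔ]; linarith
      have hbi : b i = (φ (i+1) - φ i) - a i := rfl
      rw [abs_of_nonneg h1, abs_of_nonneg h2,
        abs_of_nonneg (by rw [hΔ]; linarith : (0:ℝ) ≤ φ (i+1) - φ i)]
      linarith [hbi]
    · simp only [ha, hb, if_neg (by omega : ¬ i < k), if_neg (by omega : ¬ i = k)]
      simp
  have key : (∑ i ∈ Finset.range n, Y i * (φ (i+1) - φ i)) - (A * fx1 + B * fx2)
      = ∑ i ∈ Finset.range n, ((Y i - fx1) * a i + (Y i - fx2) * b i) := by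
    rw [← hsa, ← hsb, Finset.sum_mul, Finset.sum_mul, ← Finset.sum_add_distrib,
      ← Finset.sum_sub_distrib]
    refine Finset.sum_congr rfl fun i _ => ?_
    have hbi : b i = (φ (i+1) - φ i) - a i := rfl
    rw [hbi]; ring
  rw [key, Finset.mul_sum]
  refine le_trans (Finset.abs_sum_le_sum_abs _ _) (Finset.sum_le_sum fun i hi => ?_)
  simp only [Finset.mem_range] at hi
  obtain ⟨h1, h2⟩ := hY i hi
  calc |(Y i - fx1) * a i + (Y i - fx2) * b i|
      ≤ |Y i - fx1| * |a i| + |Y i - fx2| * |b i| := by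
        refine le_trans (abs_add_le _ _) ?_; rw [abs_mul, abs_mul]
    _ ≤ M * |a i| + M * |b i| := by
        exact add_le_add (mul_le_mul_of_nonneg_right h1 (abs_nonneg _))
          (mul_le_mul_of_nonneg_right h2 (abs_nonneg _))
    _ = M * (|a i| + |b i|) := by ring
    _ ≤ M * |φ (i+1) - φ i| := by
        exact mul_le_mul_of_nonneg_left (habs i hi) hM

set_option maxHeartbeats 1000000 in
/-- If `f` is of `r`-`H_f`-Hölder type on `[-1,1]` and `g` is of
bounded variation on `[-1,1]` with `g (-1) < g 1`, and the weights `A`, `B` of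
the two-point Gauss–Legendre rule are nonnegative, then
`|∫_{-1}^1 f dg - A·f(-√3/3) - B·f(√3/3)| ≤ H_f · ((3+√3)/3)^r · V_{-1}^1(g)`. -/
theorem two_point_GL_holder_BV (f g : ℝ → ℝ) (r Hf : ℝ) (hr : 0 < r) (hHf : 0 < Hf)
    (hf : ∀ x ∈ Set.Icc (-1 : ℝ) 1, ∀ y ∈ Set.Icc (-1 : ℝ) 1,
      |f x - f y| ≤ Hf * |x - y| ^ r)
    (hg : BoundedVariationOn g (Set.Icc (-1 : ℝ) 1))
    (hg' : g (-1) < g 1)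
    (I : ℝ) (hI : IsRSIntegral f g (-1) 1 I)
    (A B : ℝ)
    (hA : A = (Real.sqrt 3 / 2) *
      ((∫ t in (-1 : ℝ)..1, g t) - ((3 - Real.sqrt 3) / 3) * g 1
        - ((3 + Real.sqrt 3) / 3) * g (-1)))
    (hB : B = (Real.sqrt 3 / 2) *
      (((3 + Real.sqrt 3) / 3) * g 1 + ((3 - Real.sqrt 3) / 3) * g (-1)
        - ∫ t in (-1 : ℝ)..1, g t))
    (hA0 : 0 ≤ A) (hB0 : 0 ≤ B) :
    |I - A * f (-(Real.sqrt 3) / 3) - B * f (Real.sqrt 3 / 3)|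
      ≤ Hf * ((3 + Real.sqrt 3) / 3) ^ r
        * (eVariationOn g (Set.Icc (-1 : ℝ) 1)).toReal := by
  have hs2 : Real.sqrt 3 ^ 2 = 3 := Real.sq_sqrt (by norm_num)
  have hs0 : (0:ℝ) ≤ Real.sqrt 3 := Real.sqrt_nonneg 3
  have hs2' : Real.sqrt 3 ≤ 2 := by nlinarith
  set s : ℝ := Real.sqrt 3 with hsdef
  set x1 : ℝ := -s / 3 with hx1def
  set x2 : ℝ := s / 3 with hx2def
  set M : ℝ := Hf * ((3 + s) / 3) ^ r with hMdef
  set V : ℝ := (eVariationOn g (Set.Icc (-1 : ℝ) 1)).toReal with hVdef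
  have hC0 : (0:ℝ) ≤ (3 + s) / 3 := by linarith
  have hM0 : (0:ℝ) ≤ M := mul_nonneg hHf.le (Real.rpow_nonneg hC0 r)
  have hx1mem : x1 ∈ Set.Icc (-1:ℝ) 1 := by
    constructor <;> [skip; skip] <;> rw [hx1def] <;> linarith
  have hx2mem : x2 ∈ Set.Icc (-1:ℝ) 1 := by
    constructor <;> [skip; skip] <;> rw [hx2def] <;> linarith
  have hfb : ∀ y ∈ Set.Icc (-1:ℝ) 1, |f y - f x1| ≤ M ∧ |f y - f x2| ≤ M := by
    intro y hy
    obtain ⟨hy1, hy2⟩ := hy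
    constructor
    · refine le_trans (hf y ⟨hy1, hy2⟩ x1 hx1mem) ?_
      rw [hMdef]
      refine mul_le_mul_of_nonneg_left ?_ hHf.le
      refine Real.rpow_le_rpow (abs_nonneg _) ?_ hr.le
      rw [abs_le, hx1def]
      constructor <;> [linarith; linarith]
    · refine le_trans (hf y ⟨hy1, hy2⟩ x2 hx2mem) ?_
      rw [hMdef]
      refine mul_le_mul_of_nonneg_left ?_ hHf.le
      refine Real.rpow_le_rpow (abs_nonneg _) ?_ hr.le
      rw [abs_le, hx2def]
      constructor <;> [linarith; linarith]
  have hAB : A + B = g 1 - g (-1) := by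
    rw [hA, hB]
    linear_combination ((g 1 - g (-1)) / 3) * hs2
  suffices H : ∀ ε > (0:ℝ), |I - A * f x1 - B * f x2| ≤ M * V + ε by
    by_contra hcon
    push_neg at hcon
    have := H ((|I - A * f x1 - B * f x2| - M * V) / 2) (by linarith)
    linarith
  intro ε hε
  obtain ⟨δ, hδ0, hpart⟩ := hI ε hε
  obtain ⟨n, hn⟩ := exists_nat_gt (2 / δ)
  have hn0 : 0 < n := by
    have h1 : (0:ℝ) < 2 / δ := by positivity
    have h2 : (0:ℝ) < (n:ℝ) := lt_trans h1 hn
    exact_mod_cast h2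
  have hnR : (0:ℝ) < (n:ℝ) := by exact_mod_cast hn0
  set t : Fin (n+1) → ℝ := fun i => -1 + 2 * ((i:ℕ):ℝ) / n with htdef
  set ξ : Fin n → ℝ := fun i => t i.castSucc with hξdef
  have htm : Monotone t := by
    intro i j hij
    have hij' : ((i:ℕ):ℝ) ≤ ((j:ℕ):ℝ) := by exact_mod_cast hij
    rw [htdef]
    have : 2 * ((i:ℕ):ℝ) / n ≤ 2 * ((j:ℕ):ℝ) / n := by gcongr
    simpa using this
  have ht0 : t 0 = -1 := by rw [htdef]; simp
  have htl : t (Fin.last n) = 1 := by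
    rw [htdef]; simp only [Fin.val_last]; field_simp; norm_num
  have hξmem : ∀ i : Fin n, ξ i ∈ Set.Icc (t i.castSucc) (t i.succ) := by
    intro i
    exact ⟨le_refl _, htm (Fin.castSucc_lt_succ (i := i)).le⟩
  have hmesh : ∀ i : Fin n, t i.succ - t i.castSucc < δ := by
    intro i
    have heq : t i.succ - t i.castSucc = 2 / n := by
      rw [htdef]
      simp only [Fin.val_succ, Fin.coe_castSucc]
      push_cast
      field_simp
      ring
    rw [heq, div_lt_iff₀ hnR]
    have := (div_lt_iff₀ hδ0).mp hn
    nlinarith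
  have hS := hpart n t ξ htm ht0 htl hξmem hmesh
  -- members of partition in Icc
  have htIcc : ∀ i : Fin (n+1), t i ∈ Set.Icc (-1:ℝ) 1 := by
    intro i
    constructor
    · rw [← ht0]; exact htm (Fin.zero_le i)
    · rw [← htl]; exact htm (Fin.le_last i)
  -- ℕ-indexed versions
  set u : ℕ → ℝ := fun j => t ⟨min j n, Nat.lt_succ_of_le (min_le_right j n)⟩ with hudef
  set φ : ℕ → ℝ := fun j => g (u j) with hφdef
  classical
  set Y : ℕ → ℝ := fun i => if h : i < n then f (ξ ⟨i, h⟩) else 0 with hYdef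
  have hu_succ : ∀ i : Fin n, u ((i:ℕ)+1) = t i.succ := by
    intro i
    simp only [hudef]
    congr 1
    have hi := i.isLt
    ext
    simp only [Fin.val_succ]
    omega
  have hu_cast : ∀ i : Fin n, u (i:ℕ) = t i.castSucc := by
    intro i
    simp only [hudef]
    congr 1
    have hi := i.isLt
    ext
    simp only [Fin.coe_castSucc]
    omega
  have hconv : (∑ i : Fin n, f (ξ i) * (g (t i.succ) - g (t i.castSucc)))
      = ∑ i ∈ Finset.range n, Y i * (φ (i+1) - φ i) := by
    rw [← Fin.sum_univ_eq_sum_range (fun i => Y i * (φ (i+1) - φ i)) n]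
    refine Finset.sum_congr rfl fun i _ => ?_
    have h1 : Y (i:ℕ) = f (ξ i) := by rw [hYdef]; simp [i.isLt]
    have h2 : φ ((i:ℕ)+1) = g (t i.succ) := by rw [hφdef]; simp [hu_succ i]
    have h3 : φ (i:ℕ) = g (t i.castSucc) := by rw [hφdef]; simp [hu_cast i]
    rw [h1, h2, h3]
  have huMono : Monotone u := by
    intro i j hij
    rw [hudef]
    exact htm (by simp [Fin.le_def]; omega)
  have huIcc : ∀ j, u j ∈ Set.Icc (-1:ℝ) 1 := fun j => htIcc _
  have hvar : ∑ i ∈ Finset.range n, |φ (i+1) - φ i| ≤ V := by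
    have h1 := eVariationOn.sum_le (f := g) (n := n) huMono huIcc
    calc ∑ i ∈ Finset.range n, |φ (i+1) - φ i|
        = ∑ i ∈ Finset.range n, (edist (g (u (i+1))) (g (u i))).toReal := by
          refine Finset.sum_congr rfl fun i _ => ?_
          rw [edist_dist, ENNReal.toReal_ofReal dist_nonneg, Real.dist_eq, hφdef]
      _ = (∑ i ∈ Finset.range n, edist (g (u (i+1))) (g (u i))).toReal :=
          (ENNReal.toReal_sum (fun a _ => edist_ne_top _ _)).symm
      _ ≤ V := ENNReal.toReal_mono hg h1
  have hφn : φ n = g 1 := by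
    rw [hφdef, hudef]
    simp only
    rw [show (⟨min n n, Nat.lt_succ_of_le (min_le_right n n)⟩ : Fin (n+1)) = Fin.last n by
      ext; simp, htl]
  have hφ0 : φ 0 = g (-1) := by
    rw [hφdef, hudef]
    simp only
    rw [show (⟨min 0 n, Nat.lt_succ_of_le (min_le_right 0 n)⟩ : Fin (n+1)) = 0 by
      ext; simp, ht0]
  have hYb : ∀ i < n, |Y i - f x1| ≤ M ∧ |Y i - f x2| ≤ M := by
    intro i hi
    have hY : Y i = f (ξ ⟨i, hi⟩) := by rw [hYdef]; simp [hi]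
    rw [hY]
    refine hfb _ ?_
    obtain ⟨hl, hu'⟩ := hξmem ⟨i, hi⟩
    exact ⟨le_trans (htIcc _).1 hl, le_trans hu' (htIcc _).2⟩
  have hest := sum_est (f x1) (f x2) M A B n hn0 φ Y hYb hM0 hA0 hB0
    (by rw [hφn, hφ0]; exact hAB)
  rw [hconv] at hS
  set S : ℝ := ∑ i ∈ Finset.range n, Y i * (φ (i+1) - φ i) with hSdef
  calc |I - A * f x1 - B * f x2|
      = |(I - S) + (S - (A * f x1 + B * f x2))| := by congr 1; ring
    _ ≤ |I - S| + |S - (A * f x1 + B * f x2)| := abs_add_le _ _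
    _ ≤ ε + M * ∑ i ∈ Finset.range n, |φ (i+1) - φ i| := by
        refine add_le_add ?_ hest
        rw [abs_sub_comm]
        exact hS.le
    _ ≤ M * V + ε := by
        have := mul_le_mul_of_nonneg_left hvar hM0
        linarith
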